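/- For every nonnegative integer n, ∑_{k=0}^{n} (−4)^k·C(n,k)·H_k = (−3)^n·(H_n − ∑_{k=1}^n 1/(k·(−3)^k)), as an identity of rational numbers. -/

import Mathlib

/-- The k-th harmonic number as a rational number. -/
def harmonicQ (k : ℕ) : ℚ := ∑ i ∈ Finset.Icc 1 k, (1 : ℚ) / i

lemma harmonicQ_succ (n : ℕ) : harmonicQ (n + 1) = harmonicQ n + 1 / (n + 1) := by
  unfold harmonicQ
  rw [Finset.sum_Icc_succ_top (by omega)]
  push_cast
  ring

lemma sum_neg4_choose (m : ℕ) :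
    ∑ k ∈ Finset.range (m + 1), (-4 : ℚ) ^ k * m.choose k = (-3) ^ m := by
  have h := add_pow (-4 : ℚ) 1 m
  norm_num at h
  linarith [h]

lemma sum_A (n : ℕ) :
    ∑ j ∈ Finset.range (n + 1), (-4 : ℚ) ^ j * n.choose j / (j + 1) =
      (1 - (-3) ^ (n + 1)) / (4 * (n + 1)) := by
  have h1 : ∀ j : ℕ, ((n.choose j : ℚ)) / (j + 1) = ((n + 1).choose (j + 1) : ℚ) / (n + 1) := by
    intro j
    rw [div_eq_div_iff (by positivity) (by positivity)]
    have h := Nat.add_one_mul_choose_eq n j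
    have h' : ((n + 1) * n.choose j : ℚ) = ((n + 1).choose (j + 1) * (j + 1) : ℚ) := by
      exact_mod_cast congrArg (Nat.cast : ℕ → ℚ) h
    push_cast at h' ⊢
    linarith [h']
  have h2 : ∑ k ∈ Finset.range (n + 2), (-4 : ℚ) ^ k * (n + 1).choose k = (-3) ^ (n + 1) :=
    sum_neg4_choose (n + 1)
  rw [Finset.sum_range_succ'] at h2
  simp only [pow_succ', Nat.choose_zero_right, Nat.cast_one, pow_zero, one_mul, mul_one] at h2
  have h3 : ∑ j ∈ Finset.range (n + 1), (-4 : ℚ) ^ j * (n + 1).choose (j + 1) =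
      ((-3) ^ (n + 1) - 1) / (-4) := by
    rw [eq_div_iff (by norm_num : (-4 : ℚ) ≠ 0)]
    have hm : (∑ j ∈ Finset.range (n + 1), (-4 : ℚ) ^ j * (n + 1).choose (j + 1)) * (-4)
        = ∑ j ∈ Finset.range (n + 1), (-4 : ℚ) * (-4) ^ j * (n + 1).choose (j + 1) := by
      rw [Finset.sum_mul]
      apply Finset.sum_congr rfl
      intro j _
      ring
    rw [hm, pow_succ]
    linarith [h2]
  calc ∑ j ∈ Finset.range (n + 1), (-4 : ℚ) ^ j * n.choose j / (j + 1)
      = ∑ j ∈ Finset.range (n + 1), (-4 : ℚ) ^ j * (n + 1).choose (j + 1) / (n + 1) := by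
        apply Finset.sum_congr rfl
        intro j _
        rw [mul_div_assoc, h1 j, mul_div_assoc]
    _ = (∑ j ∈ Finset.range (n + 1), (-4 : ℚ) ^ j * (n + 1).choose (j + 1)) / (n + 1) := by
        rw [Finset.sum_div]
    _ = (1 - (-3) ^ (n + 1)) / (4 * (n + 1)) := by
        rw [h3]
        have : ((n : ℚ) + 1) ≠ 0 := by positivity
        field_simp
        ring

theorem harmonic_identity_1 (n : ℕ) :
    ∑ k ∈ Finset.range (n + 1), (-4 : ℚ) ^ k * (n.choose k : ℚ) * harmonicQ k =
      (-3 : ℚ) ^ n * (harmonicQ n - ∑ k ∈ Finset.Icc 1 n, 1 / ((k : ℚ) * (-3) ^ k)) := by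
  induction n with
  | zero => simp [harmonicQ]
  | succ n ih =>
    have hn1 : ((n : ℚ) + 1) ≠ 0 := by positivity
    set L := ∑ k ∈ Finset.range (n + 1), (-4 : ℚ) ^ k * (n.choose k : ℚ) * harmonicQ k with hLdef
    -- LHS recurrence
    have hL : ∑ k ∈ Finset.range (n + 2), (-4 : ℚ) ^ k * ((n + 1).choose k : ℚ) * harmonicQ k =
        -3 * L + ((-3) ^ (n + 1) - 1) / (n + 1) := by
      rw [Finset.sum_range_succ']
      simp only [Nat.choose_succ_succ]
      push_cast
      have expand : ∑ j ∈ Finset.range (n + 1),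
          (-4 : ℚ) ^ (j + 1) * ((n.choose j : ℚ) + (n.choose (j + 1) : ℚ)) * harmonicQ (j + 1) =
          ∑ j ∈ Finset.range (n + 1),
            ((-4 : ℚ) ^ (j + 1) * (n.choose (j + 1) : ℚ) * harmonicQ (j + 1)
              + (-4) * ((-4 : ℚ) ^ j * (n.choose j : ℚ) * harmonicQ j)
              + (-4) * ((-4 : ℚ) ^ j * (n.choose j : ℚ) / (j + 1))) := by
        apply Finset.sum_congr rfl
        intro j _
        rw [harmonicQ_succ]
        ring
      rw [expand, Finset.sum_add_distrib, Finset.sum_add_distrib, ← Finset.mul_sum,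
        ← Finset.mul_sum, sum_A]
      -- first sum equals original LHS sum (shift index)
      have shift : ∑ j ∈ Finset.range (n + 1),
          (-4 : ℚ) ^ (j + 1) * (n.choose (j + 1) : ℚ) * harmonicQ (j + 1) = L := by
        have e1 := Finset.sum_range_succ'
          (fun k => (-4 : ℚ) ^ k * (n.choose k : ℚ) * harmonicQ k) (n + 1)
        have e2 := Finset.sum_range_succ
          (fun k => (-4 : ℚ) ^ k * (n.choose k : ℚ) * harmonicQ k) (n + 1)
        have hlast : (-4 : ℚ) ^ (n + 1) * (n.choose (n + 1) : ℚ) * harmonicQ (n + 1) = 0 := by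
          simp [Nat.choose_eq_zero_of_lt (Nat.lt_succ_self n)]
        have h0 : (-4 : ℚ) ^ 0 * (n.choose 0 : ℚ) * harmonicQ 0 = 0 := by
          simp [harmonicQ]
        rw [hLdef]
        rw [hlast] at e2
        rw [h0] at e1
        linarith [e1, e2]
      rw [shift, ← hLdef]
      simp only [harmonicQ, Finset.Icc_self, Finset.Icc_eq_empty_of_lt (by omega : (0:ℕ) < 1),
        Finset.sum_empty]
      field_simp
      ring
    rw [hL, ih]
    rw [harmonicQ_succ,
      Finset.sum_Icc_succ_top (f := fun k : ℕ => 1 / ((k : ℚ) * (-3) ^ k)) (by omega : 1 ≤ n + 1)]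
    push_cast
    have h3 : ((-3 : ℚ)) ^ (n + 1) ≠ 0 := pow_ne_zero _ (by norm_num)
    field_simp
    ring
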